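/- arXiv:1906.04782 — 2 statements merged into one kernel-verified Lean document; each statement's English description precedes it below -/
import Mathlib

section
/- Let ν ∈ (0,1), let ι be a finite index set with |ι| ≥ 2, let m : ι → ℝ and a ∈ ι. Define the terminal value V_L(m) = max_{x∈ι} exp(m[x]) / Σ_{l∈ι} exp(m[l]). Then the one-step Q-value satisfies ∫₀^∞ V_L( m + J(y)·δ_a ) · f(y|m,a) dy = ξ(a;m) / Σ_{l∈ι} exp(m[l]), where δ_a : ι → ℝ is the 0/1 indicator vector of index a. -/
open Real MeasureTheory Finset

set_option linter.unusedSectionVars false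

noncomputable section

variable {ι : Type*} [Fintype ι] [DecidableEq ι]

/-- The log-likelihood update function `J(y) = (1-ν)y + ln ν`. -/
def Jfun (ν y : ℝ) : ℝ := (1 - ν) * y + Real.log ν

/-- `h(ν) = exp(ν ln ν/(1-ν)) - exp(ln ν/(1-ν))`. -/
def hfun (ν : ℝ) : ℝ :=
  Real.exp (ν * Real.log ν / (1 - ν)) - Real.exp (Real.log ν / (1 - ν))

/-- `g(ν) = exp(ln ν/(1-ν)) (1/(ν+1) - ln ν/(1-ν))`. -/
def gfun (ν : ℝ) : ℝ :=
  Real.exp (Real.log ν / (1 - ν)) * (1 / (ν + 1) - Real.log ν / (1 - ν))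

/-- Kronecker delta `δ[a,x]` as a real number. -/
def kdelta (a x : ι) : ℝ := if x = a then 1 else 0

theorem univ_nonempty_of_card (hcard : 2 ≤ Fintype.card ι) :
    (Finset.univ : Finset ι).Nonempty := by
  rw [← Finset.card_pos]
  have : (Finset.univ : Finset ι).card = Fintype.card ι := rfl
  omega

theorem erase_nonempty_of_card (hcard : 2 ≤ Fintype.card ι) (a : ι) :
    ((Finset.univ : Finset ι).erase a).Nonempty := by
  rw [← Finset.card_pos, Finset.card_erase_of_mem (Finset.mem_univ a)]
  have : (Finset.univ : Finset ι).card = Fintype.card ι := rfl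
  omega

theorem pairs_nonempty_of_card (hcard : 2 ≤ Fintype.card ι) :
    ((Finset.univ : Finset (ι × ι)).filter fun p => p.1 ≠ p.2).Nonempty := by
  obtain ⟨a, b, hab⟩ := Fintype.exists_pair_of_one_lt_card (α := ι) (by omega)
  exact ⟨(a, b), by simp [hab]⟩

/-- `max_{â ≠ a} m[â]`. -/
def maxOther (hcard : 2 ≤ Fintype.card ι) (m : ι → ℝ) (a : ι) : ℝ :=
  ((Finset.univ : Finset ι).erase a).sup' (erase_nonempty_of_card hcard a) m

/-- `ξ(a; m)`. -/
def xi (ν : ℝ) (hcard : 2 ≤ Fintype.card ι) (m : ι → ℝ) (a : ι) : ℝ :=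
  if maxOther hcard m a - m a < Real.log ν then Real.exp (m a)
  else Real.exp (maxOther hcard m a)
    + hfun ν * Real.exp ((m a - ν * maxOther hcard m a) / (1 - ν))

/-- `min_{x_i ≠ x_j} (m[x_i] - ν m[x_j])`, over ordered pairs of distinct indices. -/
def minPair (ν : ℝ) (hcard : 2 ≤ Fintype.card ι) (m : ι → ℝ) : ℝ :=
  (((Finset.univ : Finset (ι × ι)).filter fun p => p.1 ≠ p.2).inf'
    (pairs_nonempty_of_card hcard)) (fun p => m p.1 - ν * m p.2)

/-- The feedback density `f(y | m, a) = b[a] ν e^{-νy} + (1-b[a]) e^{-y}`. -/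
def fdens (ν : ℝ) (m : ι → ℝ) (a : ι) (y : ℝ) : ℝ :=
  (Real.exp (m a) / ∑ l, Real.exp (m l)) * (ν * Real.exp (-ν * y))
    + (1 - Real.exp (m a) / ∑ l, Real.exp (m l)) * Real.exp (-y)

/-- Terminal value `V_L(m) = max_x exp(m[x]) / ∑_l exp(m[l])`. -/
def Vterm (hcard : 2 ≤ Fintype.card ι) (m : ι → ℝ) : ℝ :=
  ((Finset.univ : Finset ι).sup' (univ_nonempty_of_card hcard) fun x => Real.exp (m x))
    / ∑ l, Real.exp (m l)


-- auxiliary lemmas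

lemma integral_exp_neg_mul_Ioi {c : ℝ} (hc : 0 < c) (b : ℝ) :
    ∫ y in Set.Ioi b, Real.exp (-c * y) = Real.exp (-c * b) / c := by
  have h : ∀ x ∈ Set.Ici b, HasDerivAt (fun y => -(Real.exp (-c * y) / c)) (Real.exp (-c * x)) x := by
    intro x _
    have h1 : HasDerivAt (fun y : ℝ => -c * y) (-c) x := by
      simpa using (hasDerivAt_id x).const_mul (-c)
    have h2 := (h1.exp.div_const c).neg
    exact h2.congr_deriv (by field_simp)
  have htend : Filter.Tendsto (fun y => -(Real.exp (-c * y) / c)) Filter.atTop (nhds 0) := by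
    have h3 : Filter.Tendsto (fun y : ℝ => c * y) Filter.atTop Filter.atTop :=
      Filter.Tendsto.const_mul_atTop hc Filter.tendsto_id
    have h4 : Filter.Tendsto (fun y : ℝ => Real.exp (-c * y)) Filter.atTop (nhds 0) := by
      have h5 : Filter.Tendsto (fun y : ℝ => Real.exp (-(c * y))) Filter.atTop (nhds 0) :=
        Real.tendsto_exp_neg_atTop_nhds_zero.comp h3
      simpa [neg_mul] using h5
    simpa using (h4.div_const c).neg
  have h6 := integral_Ioi_of_hasDerivAt_of_tendsto' h (exp_neg_integrableOn_Ioi b hc) htend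
  rw [h6]; ring

lemma integral_exp_neg_Ioc (b : ℝ) (hb : 0 ≤ b) :
    ∫ y in Set.Ioc 0 b, Real.exp (-y) = 1 - Real.exp (-b) := by
  rw [← intervalIntegral.integral_of_le hb]
  have h : ∀ x ∈ Set.uIcc (0:ℝ) b, HasDerivAt (fun y => -Real.exp (-y)) (Real.exp (-x)) x := by
    intro x _
    have h1 : HasDerivAt (fun y : ℝ => -y) (-1) x := by exact (hasDerivAt_id x).neg
    exact h1.exp.neg.congr_deriv (by simp)
  rw [intervalIntegral.integral_eq_sub_of_hasDerivAt h
    (Continuous.intervalIntegrable (by continuity) _ _)]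
  simp; ring


/-- the one-step Q-value at the terminal stage equals
`ξ(a;m) / ∑_l exp(m[l])`. -/
theorem oneStep_Q_eq_xi
    (ν : ℝ) (hν : ν ∈ Set.Ioo (0:ℝ) 1)
    (hcard : 2 ≤ Fintype.card ι) (m : ι → ℝ) (a : ι) :
    ∫ y in Set.Ioi (0:ℝ),
        Vterm hcard (fun x => m x + Jfun ν y * kdelta a x) * fdens ν m a y
      = xi ν hcard m a / ∑ l, Real.exp (m l) := by
  obtain ⟨hν0, hν1⟩ := hν
  have h1ν : (0:ℝ) < 1 - ν := by linarith
  set A := Real.exp (m a) with hA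
  set L := maxOther hcard m a with hL
  set M := Real.exp L with hM
  set S := ∑ l, Real.exp (m l) with hS
  have hSpos : 0 < S :=
    Finset.sum_pos (fun l _ => Real.exp_pos _) (univ_nonempty_of_card hcard)
  obtain ⟨b₀, hb₀⟩ := erase_nonempty_of_card hcard a
  have hb₀a : b₀ ≠ a := (Finset.mem_erase.1 hb₀).1
  have hAS : A < S :=
    Finset.single_lt_sum hb₀a (Finset.mem_univ a) (Finset.mem_univ b₀)
      (Real.exp_pos _) (fun k _ _ => (Real.exp_pos _).le)
  have hAe : ∀ y : ℝ, A * ν * Real.exp ((1-ν)*y) = Real.exp (m a + Real.log ν + (1-ν)*y) := by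
    intro y
    rw [Real.exp_add, Real.exp_add, Real.exp_log hν0, hA]
  -- pointwise identity
  have key : ∀ y : ℝ,
      Vterm hcard (fun x => m x + Jfun ν y * kdelta a x) * fdens ν m a y
        = max (A * ν * Real.exp ((1-ν)*y)) M * Real.exp (-y) / S := by
    intro y
    have hexpa : Real.exp (m a + Jfun ν y * kdelta a a) = A * ν * Real.exp ((1-ν)*y) := by
      rw [hAe y]
      congr 1
      simp [kdelta, Jfun]; ring
    have hexpx : ∀ x, x ≠ a → Real.exp (m x + Jfun ν y * kdelta a x) = Real.exp (m x) := by
      intro x hx; simp [kdelta, hx]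
    have hsup : ((Finset.univ : Finset ι).sup' (univ_nonempty_of_card hcard)
        fun x => Real.exp (m x + Jfun ν y * kdelta a x))
          = max (A * ν * Real.exp ((1-ν)*y)) M := by
      apply le_antisymm
      · apply Finset.sup'_le
        intro x _
        by_cases hx : x = a
        · subst hx; rw [hexpa]; exact le_max_left _ _
        · rw [hexpx x hx]
          refine le_trans ?_ (le_max_right _ _)
          rw [hM, Real.exp_le_exp, hL]
          exact Finset.le_sup' m (Finset.mem_erase.2 ⟨hx, Finset.mem_univ x⟩)
      · rw [max_le_iff]
        constructor
        · rw [← hexpa]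
          exact Finset.le_sup' (fun x => Real.exp (m x + Jfun ν y * kdelta a x))
            (Finset.mem_univ a)
        · obtain ⟨b, hb, hbe⟩ :=
            Finset.exists_mem_eq_sup' (α := ℝ) (erase_nonempty_of_card hcard a) m
          have hba : b ≠ a := (Finset.mem_erase.1 hb).1
          have hMb : M = Real.exp (m b + Jfun ν y * kdelta a b) := by
            rw [hexpx b hba, hM, hL, maxOther, hbe]
          rw [hMb]
          exact Finset.le_sup' (fun x => Real.exp (m x + Jfun ν y * kdelta a x))
            (Finset.mem_univ b)
    have hsum : (∑ l, Real.exp (m l + Jfun ν y * kdelta a l))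
        = A * ν * Real.exp ((1-ν)*y) + (S - A) := by
      rw [← Finset.add_sum_erase _ _ (Finset.mem_univ a), hexpa]
      congr 1
      rw [Finset.sum_congr rfl (fun x hx => hexpx x (Finset.mem_erase.1 hx).1),
        Finset.sum_erase_eq_sub (Finset.mem_univ a)]
    have hS'pos : 0 < A * ν * Real.exp ((1-ν)*y) + (S - A) := by
      have h1 : 0 < A * ν * Real.exp ((1-ν)*y) :=
        mul_pos (mul_pos (Real.exp_pos _) hν0) (Real.exp_pos _)
      linarith
    have hfd : fdens ν m a y
        = Real.exp (-y) * (A * ν * Real.exp ((1-ν)*y) + (S - A)) / S := by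
      unfold fdens
      rw [← hA, ← hS]
      have he : Real.exp (-ν*y) = Real.exp ((1-ν)*y) * Real.exp (-y) := by
        rw [← Real.exp_add]; ring_nf
      rw [he]
      field_simp
    unfold Vterm
    rw [hsup, hsum, hfd]
    field_simp
  rw [setIntegral_congr_fun measurableSet_Ioi (fun y _ => key y), integral_div]
  congr 1
  by_cases hc : L - m a < Real.log ν
  · -- Case 1
    have heq : ∀ y ∈ Set.Ioi (0:ℝ),
        max (A * ν * Real.exp ((1-ν)*y)) M * Real.exp (-y) = A * ν * Real.exp (-ν*y) := by
      intro y hy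
      have hy0 : (0:ℝ) < y := hy
      have h1 : M ≤ A * ν * Real.exp ((1-ν)*y) := by
        rw [hAe, hM, Real.exp_le_exp]
        nlinarith
      rw [max_eq_left h1, mul_assoc, ← Real.exp_add]
      congr 1; ring
    rw [setIntegral_congr_fun measurableSet_Ioi heq,
      MeasureTheory.integral_const_mul, integral_exp_neg_mul_Ioi hν0 0]
    unfold xi
    rw [← hL, if_pos hc, ← hA]
    rw [mul_zero, Real.exp_zero]
    field_simp
  · -- Case 2
    push_neg at hc
    set c := (L - m a - Real.log ν) / (1 - ν) with hcdef
    have hc0 : 0 ≤ c := div_nonneg (by linarith) h1ν.le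
    have hright : ∀ y ∈ Set.Ici c,
        max (A * ν * Real.exp ((1-ν)*y)) M * Real.exp (-y) = A * ν * Real.exp (-ν*y) := by
      intro y hy
      have hy' : c ≤ y := hy
      have h2 : L - m a - Real.log ν ≤ (1-ν) * y := by
        rw [hcdef] at hy'
        have h2' := (div_le_iff₀ h1ν).1 hy'
        nlinarith
      have h1 : M ≤ A * ν * Real.exp ((1-ν)*y) := by
        rw [hAe, hM, Real.exp_le_exp]; linarith
      rw [max_eq_left h1, mul_assoc, ← Real.exp_add]
      congr 1; ring
    have hleft : ∀ y ∈ Set.Ioc (0:ℝ) c,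
        max (A * ν * Real.exp ((1-ν)*y)) M * Real.exp (-y) = M * Real.exp (-y) := by
      intro y hy
      have hy2 : y ≤ c := hy.2
      have h3 : (1-ν)*y ≤ L - m a - Real.log ν := by
        rw [hcdef] at hy2
        have h3' := (le_div_iff₀ h1ν).1 hy2
        nlinarith
      have h1 : A * ν * Real.exp ((1-ν)*y) ≤ M := by
        rw [hAe, hM, Real.exp_le_exp]; linarith
      rw [max_eq_right h1]
    have hint1 : IntegrableOn (fun y => max (A * ν * Real.exp ((1-ν)*y)) M * Real.exp (-y))
        (Set.Ioc 0 c) := by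
      apply Continuous.integrableOn_Ioc
      have c1 : Continuous fun y : ℝ => A * ν * Real.exp ((1-ν)*y) :=
        continuous_const.mul (Real.continuous_exp.comp (continuous_const.mul continuous_id))
      have c2 : Continuous fun y : ℝ => Real.exp (-y) :=
        Real.continuous_exp.comp continuous_neg
      exact (c1.max continuous_const).mul c2
    have hint2 : IntegrableOn (fun y => max (A * ν * Real.exp ((1-ν)*y)) M * Real.exp (-y))
        (Set.Ioi c) := by
      exact MeasureTheory.IntegrableOn.congr_fun
        ((exp_neg_integrableOn_Ioi c hν0).const_mul (A*ν))
        (fun y hy => (hright y (Set.mem_Ici.2 (le_of_lt hy))).symm) measurableSet_Ioi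
    rw [← Set.Ioc_union_Ioi_eq_Ioi hc0,
      MeasureTheory.setIntegral_union (Set.Ioc_disjoint_Ioi le_rfl) measurableSet_Ioi hint1 hint2,
      setIntegral_congr_fun measurableSet_Ioc hleft,
      setIntegral_congr_fun measurableSet_Ioi (fun y hy => hright y (le_of_lt hy)),
      MeasureTheory.integral_const_mul, MeasureTheory.integral_const_mul,
      integral_exp_neg_Ioc c hc0, integral_exp_neg_mul_Ioi hν0 c]
    unfold xi
    rw [← hL, if_neg (not_lt.2 hc)]
    have e1 : M * Real.exp (-c) = Real.exp (Real.log ν/(1-ν)) * Real.exp ((m a - ν*L)/(1-ν)) := by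
      rw [hM, ← Real.exp_add, ← Real.exp_add]
      congr 1
      rw [hcdef]; field_simp; ring
    have e2 : A * Real.exp (-ν*c)
        = Real.exp (ν*Real.log ν/(1-ν)) * Real.exp ((m a - ν*L)/(1-ν)) := by
      rw [hA, ← Real.exp_add, ← Real.exp_add]
      congr 1
      rw [hcdef]; field_simp; ring
    have e3 : A*ν*(Real.exp (-ν*c)/ν) = A * Real.exp (-ν*c) := by
      field_simp
    rw [e3]
    unfold hfun
    linear_combination e2 - e1


end
end

section
/- Let ν ∈ (0,1), let ι be a finite index set with |ι| ≥ 2, fix a horizon L ≥ 1, and let V_k : (ι → ℝ) → ℝ for k = 0,…,L be defined by the backward Bellman recursion: V_L(m) = max_{x∈ι} exp(m[x])/Σ_{l∈ι} exp(m[l]) and, for 0 ≤ k < L, V_k(m) = max_{a∈ι} q_k(m,a) with q_k(m,a) = ∫₀^∞ V_{k+1}( m + J(y)·δ_a ) · f(y|m,a) dy (assume all these integrals exist). Then for every 0 ≤ k ≤ L−1, every m : ι → ℝ, and every a ∈ ι: q_k(m,a) ≤ (1 + h(ν))^{L−k−1} · ξ(a;m) / Σ_{l∈ι} exp(m[l]).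 -/
open Real MeasureTheory Finset

set_option linter.unusedSectionVars false

noncomputable section

variable {ι : Type*} [Fintype ι] [DecidableEq ι]

/-! ### Auxiliary lemmas -/

section Auxiliary

variable {ν : ℝ}

lemma hfun_pos (hν : ν ∈ Set.Ioo (0:ℝ) 1) : 0 < hfun ν := by
  obtain ⟨h0, h1⟩ := hν
  have hlog : Real.log ν < 0 := Real.log_neg h0 h1
  have h1ν : 0 < 1 - ν := by linarith
  have : Real.log ν / (1 - ν) < ν * Real.log ν / (1 - ν) := by
    apply div_lt_div_of_pos_right ?_ h1ν
    nlinarith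
  simpa [hfun, sub_pos] using Real.exp_lt_exp.2 this

lemma hfun_mul_exp (hν : ν ∈ Set.Ioo (0:ℝ) 1) :
    hfun ν * Real.exp (ν * (-Real.log ν) / (1 - ν)) = 1 - ν := by
  obtain ⟨h0, h1⟩ := hν
  have h1ν : (1:ℝ) - ν ≠ 0 := by intro h; nlinarith
  rw [hfun, sub_mul, ← Real.exp_add, ← Real.exp_add]
  have e1 : ν * Real.log ν / (1 - ν) + ν * -Real.log ν / (1 - ν) = 0 := by ring
  have e2 : Real.log ν / (1 - ν) + ν * -Real.log ν / (1 - ν) = Real.log ν := by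
    field_simp; ring
  rw [e1, e2, Real.exp_zero, Real.exp_log h0]

lemma integral_exp_neg_nu_Ioi (h0 : 0 < ν) (a : ℝ) :
    ∫ y in Set.Ioi a, Real.exp (-(ν * y)) = Real.exp (-(ν * a)) / ν := by
  have hderiv : ∀ x ∈ Set.Ici a, HasDerivAt (fun y => -Real.exp (-(ν * y)) / ν)
      (Real.exp (-(ν * x))) x := by
    intro x _
    have h : HasDerivAt (fun y => -(ν * y)) (-ν) x := by
      simpa using ((hasDerivAt_id x).const_mul ν).fun_neg
    exact (h.exp.fun_neg.div_const ν).congr_deriv (by field_simp)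
  have hint : IntegrableOn (fun y => Real.exp (-(ν * y))) (Set.Ioi a) := by
    simpa [neg_mul] using exp_neg_integrableOn_Ioi a h0
  have htend : Filter.Tendsto (fun y => -Real.exp (-(ν * y)) / ν) Filter.atTop (nhds 0) := by
    have h1 : Filter.Tendsto (fun y : ℝ => -(ν * y)) Filter.atTop Filter.atBot := by
      have := (Filter.tendsto_id (α := ℝ)).const_mul_atTop h0
      exact Filter.tendsto_neg_atBot_iff.2 this
    have h2 : Filter.Tendsto (fun y => Real.exp (-(ν * y))) Filter.atTop (nhds 0) :=
      Real.tendsto_exp_atBot.comp h1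
    have := (h2.neg).div_const ν
    simpa using this
  have := MeasureTheory.integral_Ioi_of_hasDerivAt_of_tendsto' hderiv hint htend
  rw [this]; ring

lemma exp_J_mul (c y : ℝ) :
    Real.exp (c + Jfun ν y) * Real.exp (-y) = Real.exp (c + Real.log ν) * Real.exp (-(ν * y)) := by
  rw [← Real.exp_add, ← Real.exp_add, Jfun]; ring_nf

lemma integrable_maxfun (hν : ν ∈ Set.Ioo (0:ℝ) 1) (c M : ℝ) :
    MeasureTheory.IntegrableOn
      (fun y => max (Real.exp M) (Real.exp (c + Jfun ν y)) * Real.exp (-y))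
      (Set.Ioi (0:ℝ)) := by
  have heq : (fun y => max (Real.exp M) (Real.exp (c + Jfun ν y)) * Real.exp (-y)) =
      fun y => max (Real.exp M * Real.exp (-y))
        (Real.exp (c + Real.log ν) * Real.exp (-(ν * y))) := by
    funext y
    rw [max_mul_of_nonneg _ _ (Real.exp_pos (-y)).le, exp_J_mul]
  rw [heq]
  have h1 : MeasureTheory.IntegrableOn (fun y : ℝ => Real.exp M * Real.exp (-y))
      (Set.Ioi (0:ℝ)) := by
    have := (exp_neg_integrableOn_Ioi 0 one_pos).const_mul (Real.exp M)
    simpa [neg_mul, IntegrableOn] using this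
  have h2 : MeasureTheory.IntegrableOn
      (fun y : ℝ => Real.exp (c + Real.log ν) * Real.exp (-(ν * y))) (Set.Ioi (0:ℝ)) := by
    have := (exp_neg_integrableOn_Ioi 0 hν.1).const_mul (Real.exp (c + Real.log ν))
    simpa [neg_mul, IntegrableOn] using this
  exact h1.sup h2

lemma integral_maxfun (hν : ν ∈ Set.Ioo (0:ℝ) 1) (c M : ℝ) :
    ∫ y in Set.Ioi (0:ℝ), max (Real.exp M) (Real.exp (c + Jfun ν y)) * Real.exp (-y)
    = if M - c < Real.log ν then Real.exp c
      else Real.exp M + hfun ν * Real.exp ((c - ν * M) / (1 - ν)) := by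
  obtain ⟨h0, h1⟩ := hν
  have h1ν : (0:ℝ) < 1 - ν := by linarith
  by_cases hcase : M - c < Real.log ν
  · rw [if_pos hcase]
    have heq : ∀ y ∈ Set.Ioi (0:ℝ),
        max (Real.exp M) (Real.exp (c + Jfun ν y)) * Real.exp (-y)
        = Real.exp (c + Real.log ν) * Real.exp (-(ν * y)) := by
      intro y hy
      rw [max_eq_right, exp_J_mul]
      apply Real.exp_le_exp.2
      rw [Jfun]
      nlinarith [Set.mem_Ioi.1 hy]
    rw [MeasureTheory.setIntegral_congr_fun measurableSet_Ioi heq,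
      MeasureTheory.integral_const_mul, integral_exp_neg_nu_Ioi h0]
    rw [Real.exp_add, Real.exp_log h0]
    simp
    field_simp
  · rw [if_neg hcase]
    push_neg at hcase
    set T : ℝ := (M - c - Real.log ν) / (1 - ν) with hT
    have hT0 : 0 ≤ T := by
      apply div_nonneg _ h1ν.le
      linarith
    have hsplit : Set.Ioi (0:ℝ) = Set.Ioc 0 T ∪ Set.Ioi T := (Set.Ioc_union_Ioi_eq_Ioi hT0).symm
    have hdisj : Disjoint (Set.Ioc (0:ℝ) T) (Set.Ioi T) := by
      apply Set.disjoint_left.2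
      intro y hy1 hy2
      exact absurd hy1.2 (not_le.2 (Set.mem_Ioi.1 hy2))
    rw [hsplit, MeasureTheory.setIntegral_union hdisj measurableSet_Ioi
      (((integrable_maxfun ⟨h0,h1⟩ c M).mono_set (by rw [hsplit]; exact Set.subset_union_left)))
      ((integrable_maxfun ⟨h0,h1⟩ c M).mono_set (by rw [hsplit]; exact Set.subset_union_right))]
    have hIoc : ∫ y in Set.Ioc (0:ℝ) T,
        max (Real.exp M) (Real.exp (c + Jfun ν y)) * Real.exp (-y)
        = Real.exp M * (1 - Real.exp (-T)) := by
      have heq : ∀ y ∈ Set.Ioc (0:ℝ) T,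
          max (Real.exp M) (Real.exp (c + Jfun ν y)) * Real.exp (-y)
          = Real.exp M * Real.exp (-y) := by
        intro y hy
        rw [max_eq_left]
        apply Real.exp_le_exp.2
        rw [Jfun]
        have : y ≤ T := hy.2
        have : (1 - ν) * y ≤ M - c - Real.log ν := by
          calc (1 - ν) * y ≤ (1 - ν) * T := by nlinarith
            _ = M - c - Real.log ν := by rw [hT]; field_simp
        linarith
      rw [MeasureTheory.setIntegral_congr_fun measurableSet_Ioc heq]
      rw [MeasureTheory.integral_const_mul]
      congr 1
      rw [← intervalIntegral.integral_of_le hT0]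
      have : ∀ x ∈ Set.uIcc (0:ℝ) T, HasDerivAt (fun y => -Real.exp (-y)) (Real.exp (-x)) x := by
        intro x _
        simpa using ((hasDerivAt_neg x).exp).fun_neg
      rw [intervalIntegral.integral_eq_sub_of_hasDerivAt this]
      · simp; ring
      · apply Continuous.intervalIntegrable
        continuity
    have hIoi : ∫ y in Set.Ioi T,
        max (Real.exp M) (Real.exp (c + Jfun ν y)) * Real.exp (-y)
        = Real.exp c * Real.exp (-(ν * T)) := by
      have heq : ∀ y ∈ Set.Ioi T,
          max (Real.exp M) (Real.exp (c + Jfun ν y)) * Real.exp (-y)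
          = Real.exp (c + Real.log ν) * Real.exp (-(ν * y)) := by
        intro y hy
        rw [max_eq_right, exp_J_mul]
        apply Real.exp_le_exp.2
        rw [Jfun]
        have hyT : T ≤ y := le_of_lt (Set.mem_Ioi.1 hy)
        have : M - c - Real.log ν ≤ (1 - ν) * y := by
          calc M - c - Real.log ν = (1 - ν) * T := by rw [hT]; field_simp
            _ ≤ (1 - ν) * y := by nlinarith
        linarith
      rw [MeasureTheory.setIntegral_congr_fun measurableSet_Ioi heq,
        MeasureTheory.integral_const_mul, integral_exp_neg_nu_Ioi h0]
      rw [Real.exp_add, Real.exp_log h0]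
      have hν0 : ν ≠ 0 := ne_of_gt h0
      field_simp
    rw [hIoc, hIoi]
    have e1 : Real.exp M * Real.exp (-T)
        = Real.exp (Real.log ν / (1 - ν)) * Real.exp ((c - ν * M) / (1 - ν)) := by
      rw [← Real.exp_add, ← Real.exp_add]
      congr 1
      rw [hT]
      field_simp
      ring
    have e2 : Real.exp c * Real.exp (-(ν * T))
        = Real.exp (ν * Real.log ν / (1 - ν)) * Real.exp ((c - ν * M) / (1 - ν)) := by
      rw [← Real.exp_add, ← Real.exp_add]
      congr 1
      rw [hT]
      field_simp
      ring
    rw [hfun]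
    nlinarith [e1, e2]

lemma core_ineq (hν : ν ∈ Set.Ioo (0:ℝ) 1) (mb Mh : ℝ) (hcase : Real.log ν ≤ Mh - mb) :
    Real.exp Mh + hfun ν * Real.exp ((mb - ν * Mh) / (1 - ν))
      ≤ (1 + hfun ν) * max (Real.exp mb) (Real.exp Mh) := by
  obtain ⟨h0, h1⟩ := hν
  have h1ν : (0:ℝ) < 1 - ν := by linarith
  have hh := hfun_pos ⟨h0, h1⟩
  rcases le_or_gt mb Mh with hle | hlt
  · have he : (mb - ν * Mh) / (1 - ν) ≤ Mh := by
      rw [div_le_iff₀ h1ν]; nlinarith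
    have : Real.exp ((mb - ν * Mh) / (1 - ν)) ≤ Real.exp Mh := Real.exp_le_exp.2 he
    have hmax : Real.exp Mh ≤ max (Real.exp mb) (Real.exp Mh) := le_max_right _ _
    nlinarith
  · set T : ℝ := -Real.log ν with hTdef
    have hT0 : 0 < T := by
      have : Real.log ν < 0 := Real.log_neg h0 h1
      simp [hTdef]; linarith
    set u : ℝ := mb - Mh with hudef
    have hu0 : 0 < u := by simp [hudef]; linarith
    have huT : u ≤ T := by simp [hudef, hTdef]; linarith
    set t : ℝ := u / T with htdef
    have ht0 : 0 ≤ t := le_of_lt (div_pos hu0 hT0)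
    have ht1 : t ≤ 1 := by rw [htdef, div_le_one hT0]; exact huT
    have hut : u = t * T := by rw [htdef]; field_simp
    have conv := convexOn_exp.2 (Set.mem_univ (0:ℝ))
    have c1 : Real.exp (-u) ≤ (1 - t) * 1 + t * ν := by
      calc Real.exp (-u) = Real.exp ((1-t) * 0 + t * (-T)) := by rw [hut]; ring_nf
        _ ≤ (1 - t) * 1 + t * Real.exp (-T) := by
            have := conv (Set.mem_univ (-T)) (by linarith : (0:ℝ) ≤ 1 - t) ht0 (by ring)
            simpa [smul_eq_mul] using this
        _ = (1 - t) * 1 + t * ν := by rw [hTdef, neg_neg, Real.exp_log h0]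
    have c2 : Real.exp (ν * u / (1 - ν)) ≤ (1 - t) * 1 + t * Real.exp (ν * T / (1 - ν)) := by
      calc Real.exp (ν * u / (1 - ν)) = Real.exp ((1-t) * 0 + t * (ν * T / (1 - ν))) := by
            rw [hut]; ring_nf
        _ ≤ (1 - t) * 1 + t * Real.exp (ν * T / (1 - ν)) := by
            have := conv (Set.mem_univ (ν * T / (1 - ν)))
              (by linarith : (0:ℝ) ≤ 1 - t) ht0 (by ring)
            simpa [smul_eq_mul] using this
    have key : Real.exp (-u) + hfun ν * Real.exp (ν * u / (1 - ν)) ≤ 1 + hfun ν := by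
      have hT' : hfun ν * Real.exp (ν * T / (1 - ν)) = 1 - ν := by
        have := hfun_mul_exp ⟨h0, h1⟩
        rwa [hTdef]
      calc Real.exp (-u) + hfun ν * Real.exp (ν * u / (1 - ν))
          ≤ ((1 - t) * 1 + t * ν)
              + hfun ν * ((1 - t) * 1 + t * Real.exp (ν * T / (1 - ν))) := by
            have := mul_le_mul_of_nonneg_left c2 (le_of_lt hh)
            linarith
        _ = (1 - t) * (1 + hfun ν) + t * (ν + hfun ν * Real.exp (ν * T / (1 - ν))) := by ring
        _ = (1 - t) * (1 + hfun ν) + t * 1 := by rw [hT']; ring_nf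
        _ ≤ 1 + hfun ν := by nlinarith
    have hmax : max (Real.exp mb) (Real.exp Mh) = Real.exp mb :=
      max_eq_left (Real.exp_le_exp.2 (le_of_lt hlt))
    rw [hmax]
    have e1 : Real.exp Mh = Real.exp mb * Real.exp (-u) := by
      rw [← Real.exp_add]; congr 1; simp [hudef]
    have e2 : Real.exp ((mb - ν * Mh) / (1 - ν))
        = Real.exp mb * Real.exp (ν * u / (1 - ν)) := by
      rw [← Real.exp_add]; congr 1; rw [hudef]; field_simp; ring
    rw [e1, e2]
    have hexpmb : 0 < Real.exp mb := Real.exp_pos _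
    nlinarith [key, hexpmb, hh]

lemma sum_exp_pos (hcard : 2 ≤ Fintype.card ι) (m : ι → ℝ) : 0 < ∑ l, Real.exp (m l) :=
  Finset.sum_pos (fun l _ => Real.exp_pos _) (univ_nonempty_of_card hcard)

lemma exp_maxOther (hcard : 2 ≤ Fintype.card ι) (m : ι → ℝ) (a : ι) :
    Real.exp (maxOther hcard m a)
      = ((Finset.univ : Finset ι).erase a).sup' (erase_nonempty_of_card hcard a)
          (fun x => Real.exp (m x)) := by
  rw [maxOther]
  exact Finset.comp_sup'_eq_sup'_comp _ Real.exp (fun x y => Real.exp_monotone.map_sup x y)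

lemma sup'_exp_eq_max (hcard : 2 ≤ Fintype.card ι) (m : ι → ℝ) (a : ι) :
    ((Finset.univ : Finset ι).sup' (univ_nonempty_of_card hcard) fun x => Real.exp (m x))
      = max (Real.exp (maxOther hcard m a)) (Real.exp (m a)) := by
  have h1 : (Finset.univ : Finset ι) = insert a ((Finset.univ : Finset ι).erase a) :=
    (Finset.insert_erase (Finset.mem_univ a)).symm
  rw [exp_maxOther hcard]
  rw [Finset.sup'_congr (univ_nonempty_of_card hcard) h1 (fun x _ => rfl)]
  rw [Finset.sup'_insert]
  exact max_comm _ _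

lemma maxOther_mprime (hcard : 2 ≤ Fintype.card ι) (m : ι → ℝ) (a : ι) (y : ℝ) :
    maxOther hcard (fun x => m x + Jfun ν y * kdelta a x) a = maxOther hcard m a := by
  rw [maxOther, maxOther]
  apply Finset.sup'_congr _ rfl
  intro x hx
  simp [kdelta, Finset.ne_of_mem_erase hx]

lemma sum_exp_mprime (hcard : 2 ≤ Fintype.card ι) (m : ι → ℝ) (a : ι) (y : ℝ) :
    ∑ l, Real.exp (m l + Jfun ν y * kdelta a l)
      = Real.exp (m a + Jfun ν y) + ((∑ l, Real.exp (m l)) - Real.exp (m a)) := by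
  have h1 : ∀ s : ι → ℝ, ∑ l, Real.exp (s l)
      = Real.exp (s a) + ∑ l ∈ (Finset.univ : Finset ι).erase a, Real.exp (s l) :=
    fun s => (Finset.add_sum_erase _ _ (Finset.mem_univ a)).symm
  rw [h1, h1 m]
  have h2 : ∑ l ∈ (Finset.univ : Finset ι).erase a, Real.exp (m l + Jfun ν y * kdelta a l)
      = ∑ l ∈ (Finset.univ : Finset ι).erase a, Real.exp (m l) := by
    apply Finset.sum_congr rfl
    intro x hx
    simp [kdelta, Finset.ne_of_mem_erase hx]
  rw [h2]
  simp [kdelta]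

lemma fdens_eq (hcard : 2 ≤ Fintype.card ι) (hν : ν ∈ Set.Ioo (0:ℝ) 1)
    (m : ι → ℝ) (a : ι) (y : ℝ) :
    fdens ν m a y = (∑ l, Real.exp (m l + Jfun ν y * kdelta a l)) * Real.exp (-y)
      / (∑ l, Real.exp (m l)) := by
  have hS : (0:ℝ) < ∑ l, Real.exp (m l) := sum_exp_pos hcard m
  rw [sum_exp_mprime hcard]
  have key : Real.exp (m a + Jfun ν y) * Real.exp (-y)
      = Real.exp (m a) * ν * Real.exp (-(ν * y)) := by
    rw [← Real.exp_add, Jfun]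
    have : m a + ((1 - ν) * y + Real.log ν) + -y = (m a + Real.log ν) + -(ν * y) := by ring
    rw [this, Real.exp_add, Real.exp_add, Real.exp_log hν.1]
  rw [fdens]
  field_simp
  ring_nf
  linarith [key]

lemma xi_le_sup (hν : ν ∈ Set.Ioo (0:ℝ) 1) (hcard : 2 ≤ Fintype.card ι) (m : ι → ℝ) (b : ι) :
    xi ν hcard m b ≤ (1 + hfun ν) *
      ((Finset.univ : Finset ι).sup' (univ_nonempty_of_card hcard) fun x => Real.exp (m x)) := by
  rw [sup'_exp_eq_max hcard m b, xi]
  by_cases hcase : maxOther hcard m b - m b < Real.log ν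
  · rw [if_pos hcase]
    have h1 : Real.exp (m b) ≤ max (Real.exp (maxOther hcard m b)) (Real.exp (m b)) :=
      le_max_right _ _
    nlinarith [hfun_pos hν, Real.exp_pos (m b)]
  · rw [if_neg hcase]
    have := core_ineq hν (m b) (maxOther hcard m b) (not_lt.1 hcase)
    rwa [max_comm] at this

end Auxiliary

/-- upper bound on the Q-function (Theorem 1 of the paper, upper bound). -/
theorem Qfun_upper_bound
    (ν : ℝ) (hν : ν ∈ Set.Ioo (0:ℝ) 1)
    (hcard : 2 ≤ Fintype.card ι)
    (L : ℕ) (hL : 1 ≤ L)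
    (V : ℕ → (ι → ℝ) → ℝ) (q : ℕ → (ι → ℝ) → ι → ℝ)
    (hVL : ∀ m : ι → ℝ, V L m = Vterm hcard m)
    (hq : ∀ k, k < L → ∀ (m : ι → ℝ) (a : ι),
      q k m a = ∫ y in Set.Ioi (0:ℝ),
        V (k + 1) (fun x => m x + Jfun ν y * kdelta a x) * fdens ν m a y)
    (hV : ∀ k, k < L → ∀ m : ι → ℝ,
      V k m = (Finset.univ : Finset ι).sup' (univ_nonempty_of_card hcard) (q k m))
    (hint : ∀ k, k < L → ∀ (m : ι → ℝ) (a : ι),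
      MeasureTheory.IntegrableOn
        (fun y => V (k + 1) (fun x => m x + Jfun ν y * kdelta a x) * fdens ν m a y)
        (Set.Ioi (0:ℝ))) :
    ∀ k, k ≤ L - 1 → ∀ (m : ι → ℝ) (a : ι),
      q k m a ≤ (1 + hfun ν) ^ (L - k - 1) * xi ν hcard m a / ∑ l, Real.exp (m l) := by
  have hh : 0 < hfun ν := hfun_pos hν
  have h1h : (0:ℝ) < 1 + hfun ν := by linarith
  -- the one-step estimate
  have step : ∀ k, k < L → ∀ C : ℝ, 0 ≤ C →
      (∀ m' : ι → ℝ, V (k+1) m' ≤ C *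
        ((Finset.univ : Finset ι).sup' (univ_nonempty_of_card hcard) fun x => Real.exp (m' x))
          / ∑ l, Real.exp (m' l)) →
      ∀ (m : ι → ℝ) (a : ι), q k m a ≤ C * xi ν hcard m a / ∑ l, Real.exp (m l) := by
    intro k hk C hC hVb m a
    have hS : (0:ℝ) < ∑ l, Real.exp (m l) := sum_exp_pos hcard m
    rw [hq k hk m a]
    have hpt : ∀ y ∈ Set.Ioi (0:ℝ),
        V (k+1) (fun x => m x + Jfun ν y * kdelta a x) * fdens ν m a y
        ≤ (C / ∑ l, Real.exp (m l)) *
            (max (Real.exp (maxOther hcard m a)) (Real.exp (m a + Jfun ν y))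
              * Real.exp (-y)) := by
      intro y _
      set m' : ι → ℝ := fun x => m x + Jfun ν y * kdelta a x with hm'
      have hS' : (0:ℝ) < ∑ l, Real.exp (m' l) := sum_exp_pos hcard m'
      have hf : fdens ν m a y
          = (∑ l, Real.exp (m' l)) * Real.exp (-y) / ∑ l, Real.exp (m l) :=
        fdens_eq hcard hν m a y
      have hf0 : 0 ≤ fdens ν m a y := by
        rw [hf]; positivity
      have h1 := hVb m'
      have hsup : ((Finset.univ : Finset ι).sup' (univ_nonempty_of_card hcard)
            fun x => Real.exp (m' x))
          = max (Real.exp (maxOther hcard m a)) (Real.exp (m a + Jfun ν y)) := by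
        rw [sup'_exp_eq_max hcard m' a, maxOther_mprime hcard m a y]
        congr 1
        simp [hm', kdelta]
      calc V (k+1) m' * fdens ν m a y
          ≤ (C * ((Finset.univ : Finset ι).sup' (univ_nonempty_of_card hcard)
              fun x => Real.exp (m' x)) / ∑ l, Real.exp (m' l)) * fdens ν m a y :=
            mul_le_mul_of_nonneg_right h1 hf0
        _ = (C / ∑ l, Real.exp (m l)) *
            (max (Real.exp (maxOther hcard m a)) (Real.exp (m a + Jfun ν y))
              * Real.exp (-y)) := by
            rw [hf, hsup]
            field_simp
    have hint1 := hint k hk m a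
    have hint2 : MeasureTheory.IntegrableOn (fun y => (C / ∑ l, Real.exp (m l)) *
        (max (Real.exp (maxOther hcard m a)) (Real.exp (m a + Jfun ν y)) * Real.exp (-y)))
        (Set.Ioi (0:ℝ)) :=
      (integrable_maxfun hν (m a) (maxOther hcard m a)).const_mul _
    calc (∫ y in Set.Ioi (0:ℝ),
            V (k+1) (fun x => m x + Jfun ν y * kdelta a x) * fdens ν m a y)
        ≤ ∫ y in Set.Ioi (0:ℝ), (C / ∑ l, Real.exp (m l)) *
            (max (Real.exp (maxOther hcard m a)) (Real.exp (m a + Jfun ν y))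
              * Real.exp (-y)) :=
          MeasureTheory.setIntegral_mono_on hint1 hint2 measurableSet_Ioi hpt
      _ = (C / ∑ l, Real.exp (m l)) * ∫ y in Set.Ioi (0:ℝ),
            max (Real.exp (maxOther hcard m a)) (Real.exp (m a + Jfun ν y))
              * Real.exp (-y) := MeasureTheory.integral_const_mul _ _
      _ = (C / ∑ l, Real.exp (m l)) * xi ν hcard m a := by
          rw [integral_maxfun hν (m a) (maxOther hcard m a), xi]
      _ = C * xi ν hcard m a / ∑ l, Real.exp (m l) := by ring
  -- base case bound for V L
  have hVLbound : ∀ m' : ι → ℝ, V L m' ≤ (1:ℝ) *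
      ((Finset.univ : Finset ι).sup' (univ_nonempty_of_card hcard) fun x => Real.exp (m' x))
        / ∑ l, Real.exp (m' l) := by
    intro m'
    rw [hVL m', Vterm, one_mul]
  have main : ∀ n k, k < L → L - 1 - k ≤ n → ∀ (m : ι → ℝ) (a : ι),
      q k m a ≤ (1 + hfun ν) ^ (L - k - 1) * xi ν hcard m a / ∑ l, Real.exp (m l) := by
    intro n
    induction n with
    | zero =>
      intro k hk hn m a
      have hkL : k = L - 1 := by omega
      have hexp : L - k - 1 = 0 := by omega
      have hk1 : k + 1 = L := by omega
      rw [hexp, pow_zero]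
      apply step k hk 1 zero_le_one _ m a
      intro m'
      rw [hk1]
      exact hVLbound m'
    | succ n ih =>
      intro k hk hn m a
      by_cases hkl : k + 1 = L
      · have hexp : L - k - 1 = 0 := by omega
        rw [hexp, pow_zero]
        apply step k hk 1 zero_le_one _ m a
        intro m'
        rw [hkl]
        exact hVLbound m'
      · have hklt : k + 1 < L := by omega
        have hCpos : (0:ℝ) ≤ (1 + hfun ν) ^ (L - k - 1) := by positivity
        apply step k hk ((1 + hfun ν) ^ (L - k - 1)) hCpos _ m a
        intro m'
        rw [hV (k+1) hklt m']
        apply Finset.sup'_le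
        intro b _
        have h1 := ih (k+1) hklt (by omega) m' b
        have h2 := xi_le_sup hν hcard m' b
        have hS' : (0:ℝ) < ∑ l, Real.exp (m' l) := sum_exp_pos hcard m'
        have hpow : (0:ℝ) ≤ (1 + hfun ν) ^ (L - (k+1) - 1) := by positivity
        calc q (k+1) m' b
            ≤ (1 + hfun ν) ^ (L - (k+1) - 1) * xi ν hcard m' b / ∑ l, Real.exp (m' l) := h1
          _ ≤ (1 + hfun ν) ^ (L - (k+1) - 1) * ((1 + hfun ν) *
              ((Finset.univ : Finset ι).sup' (univ_nonempty_of_card hcard)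
                fun x => Real.exp (m' x))) / ∑ l, Real.exp (m' l) := by
              gcongr
          _ = (1 + hfun ν) ^ (L - k - 1) *
              ((Finset.univ : Finset ι).sup' (univ_nonempty_of_card hcard)
                fun x => Real.exp (m' x)) / ∑ l, Real.exp (m' l) := by
              rw [show L - k - 1 = (L - (k+1) - 1) + 1 by omega, pow_succ]
              ring
  intro k hk m a
  exact main (L - 1 - k) k (by omega) le_rfl m a

end
end
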